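/- Let a, b be integers with 1 ≤ a ≤ b, set n = ab, and let μ = (b^a) be the rectangular partition of n with a rows of length b. Then f^μ ≥ (n! / (b!)^a) · 2^{−2n}. -/

import Mathlib

/-- The rectangular Young diagram with `a` rows of length `b`. -/
def rect (a b : ℕ) : YoungDiagram where
  cells := Finset.range a ×ˢ Finset.range b
  isLowerSet := by
    intro x y h hm
    simp only [Finset.coe_product, Set.mem_prod, Set.mem_setOf_eq, Finset.mem_coe, Finset.mem_range] at hm ⊢
    obtain ⟨h1, h2⟩ := h
    exact ⟨lt_of_le_of_lt h1 hm.1, lt_of_le_of_lt h2 hm.2⟩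

/-- The hook length of the (0-indexed) cell `(i, j)` of a Young diagram. -/
def hookLen (μ : YoungDiagram) (i j : ℕ) : ℕ :=
  (μ.rowLen i - (j + 1)) + (μ.colLen j - (i + 1)) + 1

/-- `T : ℕ × ℕ → ℕ` is a standard Young tableau of shape `μ` (with `μ.card` cells):
it fills the cells of `μ` bijectively with the numbers `1, …, μ.card`, is zero
outside `μ`, and is strictly increasing along rows and down columns. -/
def IsSYT (μ : YoungDiagram) (T : ℕ × ℕ → ℕ) : Prop :=
  (∀ c ∈ μ.cells, T c ∈ Finset.Icc 1 μ.card) ∧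
  (∀ c ∉ μ.cells, T c = 0) ∧
  Set.InjOn T ↑μ.cells ∧
  (∀ i j1 j2 : ℕ, j1 < j2 → (i, j2) ∈ μ → T (i, j1) < T (i, j2)) ∧
  (∀ i1 i2 j : ℕ, i1 < i2 → (i2, j) ∈ μ → T (i1, j) < T (i2, j))

/-- `fdeg μ`, the degree of the ordinary irreducible character of the symmetric
group associated to `μ`, i.e. the number of standard Young tableaux of shape `μ`. -/
noncomputable def fdeg (μ : YoungDiagram) : ℕ :=
  Nat.card { T : ℕ × ℕ → ℕ // IsSYT μ T }

/-- The diagonal (Durfee square size) of a Young diagram: the number of diagonal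
cells, i.e. the side of the largest square contained in it. -/
def durfee (μ : YoungDiagram) : ℕ :=
  (μ.cells.filter fun c => c.1 = c.2).card

open Classical in
/-- The quantity ρ of the paper: `δ²` when `α ∈ ℕ`, and `⌊δ²/(α − ⌊α⌋)⌋ + 1` otherwise. -/
noncomputable def rho (α : ℝ) (δ : ℕ) : ℕ :=
  if ∃ m : ℕ, (m : ℝ) = α then δ ^ 2
  else ⌊(δ : ℝ) ^ 2 / (α - ⌊α⌋₊)⌋₊ + 1

/-! ### Finiteness -/

lemma isSYT_val_le {μ : YoungDiagram} {T : ℕ × ℕ → ℕ} (hT : IsSYT μ T) (c : ℕ × ℕ) :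
    T c ≤ μ.card := by
  by_cases hc : c ∈ μ.cells
  · exact (Finset.mem_Icc.mp (hT.1 c hc)).2
  · simp [hT.2.1 c hc]

instance sytFinite (μ : YoungDiagram) : Finite { T : ℕ × ℕ → ℕ // IsSYT μ T } := by
  have : Function.Injective
      (fun T : { T : ℕ × ℕ → ℕ // IsSYT μ T } =>
        (fun c : μ.cells => (⟨T.1 c, Nat.lt_succ_of_le (isSYT_val_le T.2 c)⟩ : Fin (μ.card + 1)))) := by
    rintro ⟨T, hT⟩ ⟨S, hS⟩ h
    have : T = S := by
      ext c
      by_cases hc : c ∈ μ.cells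
      · simpa using congrFun h ⟨c, hc⟩
      · rw [hT.2.1 c hc, hS.2.1 c hc]
    exact Subtype.ext this
  exact Finite.of_injective _ this

/-! ### Corner removal -/

/-- Row `r` has a removable corner. -/
def Removable (ν : YoungDiagram) (r : ℕ) : Prop := ν.rowLen (r + 1) < ν.rowLen r

instance (ν : YoungDiagram) (r : ℕ) : Decidable (Removable ν r) := by
  unfold Removable; infer_instance

lemma Removable.pos {ν : YoungDiagram} {r : ℕ} (h : Removable ν r) : 0 < ν.rowLen r := by
  unfold Removable at h; omega

lemma corner_mem {ν : YoungDiagram} {r : ℕ} (h : Removable ν r) :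
    (r, ν.rowLen r - 1) ∈ ν := by
  rw [YoungDiagram.mem_iff_lt_rowLen]
  exact Nat.sub_lt h.pos Nat.one_pos

lemma erase_corner_isLowerSet {ν : YoungDiagram} {r : ℕ} (h : Removable ν r) :
    IsLowerSet (↑(ν.cells.erase (r, ν.rowLen r - 1)) : Set (ℕ × ℕ)) := by
  intro x y hyx hx
  simp only [Finset.coe_erase, Set.mem_diff, Finset.mem_coe, Set.mem_singleton_iff] at hx ⊢
  obtain ⟨hxν, hxc⟩ := hx
  refine ⟨ν.isLowerSet hyx hxν, ?_⟩
  rintro rfl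
  -- y = corner, y ≤ x, x ∈ ν, x ≠ corner
  obtain ⟨hr, hj⟩ := hyx
  simp only at hr hj
  -- x = (x.1, x.2) with r ≤ x.1, rowLen r - 1 ≤ x.2
  have hx2 : x.2 < ν.rowLen x.1 := by
    rw [← YoungDiagram.mem_iff_lt_rowLen]; exact (by simpa using hxν)
  have hle : ν.rowLen x.1 ≤ ν.rowLen r := ν.rowLen_anti r x.1 hr
  have hx2' : x.2 = ν.rowLen r - 1 := le_antisymm (by omega) hj
  have hx1 : x.1 = r := by
    by_contra hne
    have h1 : r + 1 ≤ x.1 := by omega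
    have := ν.rowLen_anti (r+1) x.1 h1
    unfold Removable at h
    omega
  exact hxc (Prod.ext hx1 hx2')

/-- erase the corner in row `r` (junk value `ν` if not removable). -/
def eraseC (ν : YoungDiagram) (r : ℕ) : YoungDiagram :=
  if h : Removable ν r then
    ⟨ν.cells.erase (r, ν.rowLen r - 1), erase_corner_isLowerSet h⟩
  else ν

lemma eraseC_cells {ν : YoungDiagram} {r : ℕ} (h : Removable ν r) :
    (eraseC ν r).cells = ν.cells.erase (r, ν.rowLen r - 1) := by
  unfold eraseC; rw [dif_pos h]

lemma mem_eraseC {ν : YoungDiagram} {r : ℕ} (h : Removable ν r) {x : ℕ × ℕ} :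
    x ∈ eraseC ν r ↔ x ∈ ν ∧ x ≠ (r, ν.rowLen r - 1) := by
  show x ∈ (eraseC ν r).cells ↔ _
  rw [eraseC_cells h, Finset.mem_erase]
  exact ⟨fun ⟨h1, h2⟩ => ⟨h2, h1⟩, fun ⟨h1, h2⟩ => ⟨h2, h1⟩⟩

lemma eraseC_card {ν : YoungDiagram} {r : ℕ} (h : Removable ν r) :
    (eraseC ν r).card = ν.card - 1 := by
  show (eraseC ν r).cells.card = ν.cells.card - 1
  rw [eraseC_cells h, Finset.card_erase_of_mem (corner_mem h)]

lemma card_pos_of_removable {ν : YoungDiagram} {r : ℕ} (h : Removable ν r) :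
    0 < ν.card :=
  Finset.card_pos.mpr ⟨_, corner_mem h⟩

lemma eraseC_rowLen {ν : YoungDiagram} {r : ℕ} (h : Removable ν r) (i : ℕ) :
    (eraseC ν r).rowLen i = if i = r then ν.rowLen r - 1 else ν.rowLen i := by
  have hmem : ∀ j, ((i, j) ∈ eraseC ν r ↔ j < (if i = r then ν.rowLen r - 1 else ν.rowLen i)) := by
    intro j
    rw [mem_eraseC h, YoungDiagram.mem_iff_lt_rowLen]
    split_ifs with hir
    · subst hir
      constructor
      · rintro ⟨h1, h2⟩
        have : j ≠ ν.rowLen i - 1 := fun hj => h2 (by rw [hj])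
        omega
      · intro hj
        constructor
        · omega
        · intro hc
          have := congrArg Prod.snd hc
          simp only at this
          omega
    · constructor
      · rintro ⟨h1, _⟩; exact h1
      · intro hj
        refine ⟨hj, fun hc => hir (congrArg Prod.fst hc)⟩
  have h1 : ∀ j, ((i, j) ∈ eraseC ν r ↔ j < (eraseC ν r).rowLen i) := fun j =>
    YoungDiagram.mem_iff_lt_rowLen
  have hiff : ∀ j, (j < (eraseC ν r).rowLen i ↔ j < (if i = r then ν.rowLen r - 1 else ν.rowLen i)) :=
    fun j => (h1 j).symm.trans (hmem j)
  set m := if i = r then ν.rowLen r - 1 else ν.rowLen i with hm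
  have h2 := hiff ((eraseC ν r).rowLen i)
  have h3 := hiff m
  omega

lemma eraseC_colLen_le {ν : YoungDiagram} (r : ℕ) :
    (eraseC ν r).colLen 0 ≤ ν.colLen 0 := by
  by_contra hcon
  push_neg at hcon
  have : (ν.colLen 0, 0) ∈ eraseC ν r := by
    rw [YoungDiagram.mem_iff_lt_colLen]; exact hcon
  by_cases h : Removable ν r
  · rw [mem_eraseC h] at this
    have := this.1
    rw [YoungDiagram.mem_iff_lt_colLen] at this
    omega
  · unfold eraseC at this
    rw [dif_neg h] at this
    rw [YoungDiagram.mem_iff_lt_colLen] at this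
    omega

/-! ### The extension map and the key counting inequality -/

lemma extend_isSYT {ν : YoungDiagram} {r : ℕ} (h : Removable ν r)
    {T : ℕ × ℕ → ℕ} (hT : IsSYT (eraseC ν r) T) :
    IsSYT ν (fun x => if x = (r, ν.rowLen r - 1) then ν.card else T x) := by
  obtain ⟨hIcc, hzero, hinj, hrow, hcol⟩ := hT
  have hcard : (eraseC ν r).card = ν.card - 1 := eraseC_card h
  have hn : 0 < ν.card := card_pos_of_removable h
  have hlt : ∀ x ∈ (eraseC ν r).cells, T x < ν.card := by
    intro x hx
    have := (Finset.mem_Icc.mp (hIcc x hx)).2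
    omega
  have hge : ∀ x ∈ (eraseC ν r).cells, 1 ≤ T x := fun x hx => (Finset.mem_Icc.mp (hIcc x hx)).1
  set c := (r, ν.rowLen r - 1) with hc
  refine ⟨?_, ?_, ?_, ?_, ?_⟩
  · intro x hx
    by_cases hxc : x = c
    · subst hxc
      simp only [if_pos rfl, Finset.mem_Icc]
      exact ⟨hn, le_rfl⟩
    · simp only [hxc, if_false]
      have hx' : x ∈ (eraseC ν r).cells := by
        rw [YoungDiagram.mem_cells, mem_eraseC h]; exact ⟨hx, hxc⟩
      rw [Finset.mem_Icc]
      exact ⟨hge x hx', le_of_lt (hlt x hx')⟩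
  · intro x hx
    have hxc : x ≠ c := fun hh => hx (by rw [hh]; exact corner_mem h)
    simp only [hxc, if_false]
    apply hzero
    rw [YoungDiagram.mem_cells, mem_eraseC h]
    rintro ⟨h1, _⟩; exact hx h1
  · intro x hx y hy hxy
    simp only [Finset.mem_coe] at hx hy
    by_cases hxc : x = c <;> by_cases hyc : y = c
    · rw [hxc, hyc]
    · simp only [hxc, hyc, if_true, if_false] at hxy
      have hy' : y ∈ (eraseC ν r).cells := by
        rw [YoungDiagram.mem_cells, mem_eraseC h]; exact ⟨hy, hyc⟩
      exfalso; have := hlt y hy'; omega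
    · simp only [hxc, hyc, if_true, if_false] at hxy
      have hx' : x ∈ (eraseC ν r).cells := by
        rw [YoungDiagram.mem_cells, mem_eraseC h]; exact ⟨hx, hxc⟩
      exfalso; have := hlt x hx'; omega
    · simp only [hxc, hyc, if_false] at hxy
      have hx' : x ∈ (eraseC ν r).cells := by
        rw [YoungDiagram.mem_cells, mem_eraseC h]; exact ⟨hx, hxc⟩
      have hy' : y ∈ (eraseC ν r).cells := by
        rw [YoungDiagram.mem_cells, mem_eraseC h]; exact ⟨hy, hyc⟩
      exact hinj (Finset.mem_coe.mpr hx') (Finset.mem_coe.mpr hy') hxy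
  · -- rows
    intro i j1 j2 hj (hm : (i, j2) ∈ ν)
    have hj1ν : (i, j1) ∈ ν := ν.up_left_mem (le_refl i) (le_of_lt hj) hm
    by_cases h2c : (i, j2) = c
    · have hj1c : (i, j1) ≠ c := by
        intro hh
        have e1 := congrArg Prod.snd hh
        have e2 := congrArg Prod.snd h2c
        simp only at e1 e2
        omega
      have hj1' : (i, j1) ∈ (eraseC ν r).cells := by
        rw [YoungDiagram.mem_cells, mem_eraseC h]; exact ⟨hj1ν, hj1c⟩
      simp only [h2c, hj1c, if_true, if_false]
      exact hlt _ hj1'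
    · have hj1c : (i, j1) ≠ c := by
        intro hh
        have e1 := congrArg Prod.fst hh
        have e2 := congrArg Prod.snd hh
        simp only [hc] at e1 e2
        subst e1
        rw [YoungDiagram.mem_iff_lt_rowLen] at hm
        omega
      have h2' : (i, j2) ∈ eraseC ν r := by rw [mem_eraseC h]; exact ⟨hm, h2c⟩
      simp only [h2c, hj1c, if_false]
      exact hrow i j1 j2 hj h2'
  · -- columns
    intro i1 i2 j hi (hm : (i2, j) ∈ ν)
    have hi1ν : (i1, j) ∈ ν := ν.up_left_mem (le_of_lt hi) (le_refl j) hm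
    by_cases h2c : (i2, j) = c
    · have hi1c : (i1, j) ≠ c := by
        intro hh
        have e1 := congrArg Prod.fst hh
        have e2 := congrArg Prod.fst h2c
        simp only at e1 e2
        omega
      have hi1' : (i1, j) ∈ (eraseC ν r).cells := by
        rw [YoungDiagram.mem_cells, mem_eraseC h]; exact ⟨hi1ν, hi1c⟩
      simp only [h2c, hi1c, if_true, if_false]
      exact hlt _ hi1'
    · have hi1c : (i1, j) ≠ c := by
        intro hh
        have e1 := congrArg Prod.fst hh
        have e2 := congrArg Prod.snd hh
        simp only [hc] at e1 e2
        subst e2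
        -- i1 = r, j = rowLen r - 1, i2 > i1, (i2, j) ∈ ν
        rw [YoungDiagram.mem_iff_lt_rowLen] at hm
        have : ν.rowLen i2 ≤ ν.rowLen (r + 1) := ν.rowLen_anti (r+1) i2 (by omega)
        unfold Removable at h
        omega
      have h2' : (i2, j) ∈ eraseC ν r := by rw [mem_eraseC h]; exact ⟨hm, h2c⟩
      simp only [h2c, hi1c, if_false]
      exact hcol i1 i2 j hi h2'

lemma sum_fdeg_le (ν : YoungDiagram) (N : ℕ) :
    (∑ r ∈ Finset.range N, if Removable ν r then fdeg (eraseC ν r) else 0) ≤ fdeg ν := by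
  classical
  -- sigma type
  set Y : Fin N → Type := fun r => { T : ℕ × ℕ → ℕ // IsSYT (eraseC ν r) T ∧ Removable ν r }
    with hY
  have hYfin : ∀ r, Finite (Y r) := by
    intro r
    have : Function.Injective (fun T : Y r => (⟨T.1, T.2.1⟩ : { T : ℕ × ℕ → ℕ // IsSYT (eraseC ν r) T })) := by
      rintro ⟨T, hT⟩ ⟨S, hS⟩ hh
      have hTS : T = S := congrArg Subtype.val hh
      exact Subtype.ext hTS
    exact Finite.of_injective _ this
  have hcardY : ∀ r : Fin N, Nat.card (Y r) = if Removable ν r then fdeg (eraseC ν r) else 0 := by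
    intro r
    by_cases h : Removable ν (r : ℕ)
    · rw [if_pos h]
      exact Nat.card_congr (Equiv.subtypeEquivRight (fun T => by simp [h]))
    · rw [if_neg h]
      have : IsEmpty (Y r) := ⟨fun T => h T.2.2⟩
      exact Nat.card_of_isEmpty
  -- the injection
  have hF : ∃ F : (Σ r : Fin N, Y r) → { T : ℕ × ℕ → ℕ // IsSYT ν T }, Function.Injective F := by
    refine ⟨fun x => ⟨fun y => if y = ((x.1 : ℕ), ν.rowLen (x.1 : ℕ) - 1) then ν.card else x.2.1 y,
      extend_isSYT x.2.2.2 x.2.2.1⟩, ?_⟩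
    rintro ⟨r, T, hT, hr⟩ ⟨r', T', hT', hr'⟩ hh
    have heq := congrArg Subtype.val hh
    simp only at heq
    have hrr : (r : ℕ) = (r' : ℕ) := by
      by_contra hne
      have h1 := congrFun heq ((r : ℕ), ν.rowLen (r : ℕ) - 1)
      have hne' : ((r:ℕ), ν.rowLen (r:ℕ) - 1) ≠ ((r':ℕ), ν.rowLen (r':ℕ) - 1) := by
        intro hc; exact hne (congrArg Prod.fst hc)
      simp only [if_neg hne'] at h1
      simp only [if_true] at h1
      -- T' of that cell is < card or 0
      have hn : 0 < ν.card := card_pos_of_removable hr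
      by_cases hmem : ((r:ℕ), ν.rowLen (r:ℕ) - 1) ∈ (eraseC ν (r':ℕ)).cells
      · have := (Finset.mem_Icc.mp (hT'.1 _ hmem)).2
        rw [eraseC_card hr'] at this
        omega
      · have := hT'.2.1 _ hmem
        omega
    have hrr' : r = r' := Fin.ext hrr
    subst hrr'
    refine Sigma.ext rfl ?_
    simp only [heq_eq_eq]
    refine Subtype.ext ?_
    show T = T'
    funext y
    by_cases hyc : y = ((r : ℕ), ν.rowLen (r : ℕ) - 1)
    · have h0 : T y = 0 := by
        apply hT.2.1
        rw [YoungDiagram.mem_cells, mem_eraseC hr]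
        rintro ⟨_, hne⟩; exact hne hyc
      have h0' : T' y = 0 := by
        apply hT'.2.1
        rw [YoungDiagram.mem_cells, mem_eraseC hr]
        rintro ⟨_, hne⟩; exact hne hyc
      rw [h0, h0']
    · have h1 := congrFun heq y
      simp only [if_neg hyc] at h1
      exact h1
  obtain ⟨F, hFinj⟩ := hF
  have hle : Nat.card (Σ r : Fin N, Y r) ≤ Nat.card { T : ℕ × ℕ → ℕ // IsSYT ν T } :=
    Nat.card_le_card_of_injective F hFinj
  have : Nat.card (Σ r : Fin N, Y r) = ∑ r : Fin N, Nat.card (Y r) := by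
    have : ∀ r, Fintype (Y r) := fun r => @Fintype.ofFinite _ (hYfin r)
    rw [Nat.card_eq_fintype_card, Fintype.card_sigma]
    congr 1
    ext r
    rw [Nat.card_eq_fintype_card]
  rw [this] at hle
  calc (∑ r ∈ Finset.range N, if Removable ν r then fdeg (eraseC ν r) else 0)
      = ∑ r : Fin N, if Removable ν (r : ℕ) then fdeg (eraseC ν (r : ℕ)) else 0 := by
        exact (Fin.sum_univ_eq_sum_range (fun r => if Removable ν r then fdeg (eraseC ν r) else 0) N).symm
    _ = ∑ r : Fin N, Nat.card (Y r) := by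
        apply Finset.sum_congr rfl
        intro r _
        exact (hcardY r).symm
    _ ≤ fdeg ν := hle

lemma fdeg_bot_pos : 1 ≤ fdeg ⊥ := by
  have : IsSYT ⊥ (fun _ => 0) := by
    refine ⟨?_, ?_, ?_, ?_, ?_⟩
    · intro c hc; simp at hc
    · intro c _; rfl
    · intro x hx; simp at hx
    · intro i j1 j2 _ hm; simp [YoungDiagram.cells_bot] at hm
    · intro i1 i2 j _ hm; simp [YoungDiagram.cells_bot] at hm
  have : Nonempty { T : ℕ × ℕ → ℕ // IsSYT ⊥ T } := ⟨⟨_, this⟩⟩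
  exact Nat.one_le_iff_ne_zero.mpr (Nat.card_ne_zero.mpr ⟨this, sytFinite ⊥⟩)

open Polynomial Finset

noncomputable def Pprod (m : ℕ) (w : ℕ → ℝ) : ℝ[X] := ∏ j ∈ Finset.range m, (X - C (w j))

lemma Pprod_monic (m : ℕ) (w : ℕ → ℝ) : (Pprod m w).Monic :=
  monic_prod_of_monic _ _ (fun j _ => monic_X_sub_C _)

lemma Pprod_natDegree (m : ℕ) (w : ℕ → ℝ) : (Pprod m w).natDegree = m := by
  rw [Pprod, natDegree_prod_of_monic _ _ (fun j _ => monic_X_sub_C _)]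
  simp [natDegree_X_sub_C]

lemma Pprod_coeff_top (m : ℕ) (w : ℕ → ℝ) : (Pprod m w).coeff m = 1 := by
  have := (Pprod_monic m w).coeff_natDegree
  rwa [Pprod_natDegree] at this

lemma Pprod_coeff_one : ∀ (k : ℕ) (w : ℕ → ℝ),
    (Pprod (k+1) w).coeff k = -∑ j ∈ Finset.range (k+1), w j := by
  intro k
  induction k with
  | zero =>
    intro w
    rw [Pprod]
    simp [Finset.prod_range_one, coeff_sub, coeff_X_zero, coeff_C]
  | succ k ih =>
    intro w
    have hsplit : Pprod (k+2) w = Pprod (k+1) w * (X - C (w (k+1))) := by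
      rw [Pprod, Pprod, Finset.prod_range_succ]
    rw [hsplit, coeff_mul_X_sub_C, ih w, Pprod_coeff_top,
      show k+2 = (k+1)+1 from rfl, Finset.sum_range_succ (f := w) (n := k+1)]
    ring

lemma Pprod_coeff_two : ∀ (k : ℕ) (w : ℕ → ℝ),
    (Pprod (k+2) w).coeff k =
      ((∑ j ∈ Finset.range (k+2), w j)^2 - ∑ j ∈ Finset.range (k+2), (w j)^2)/2 := by
  intro k
  induction k with
  | zero =>
    intro w
    have hsplit : Pprod 2 w = (X - C (w 0)) * (X - C (w 1)) := by
      rw [Pprod]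
      rw [Finset.prod_range_succ, Finset.prod_range_one]
    rw [hsplit, mul_coeff_zero]
    simp only [coeff_sub, coeff_X_zero, coeff_C, if_true, if_pos]
    rw [Finset.sum_range_succ, Finset.sum_range_one, Finset.sum_range_succ,
      Finset.sum_range_one]
    ring
  | succ k ih =>
    intro w
    have hsplit : Pprod (k+3) w = Pprod (k+2) w * (X - C (w (k+2))) := by
      rw [Pprod, Pprod, Finset.prod_range_succ]
    rw [hsplit, coeff_mul_X_sub_C, ih w, Pprod_coeff_one (k+1) w]
    rw [Finset.sum_range_succ (f := w) (n := k+2), Finset.sum_range_succ (f := fun j => (w j)^2) (n := k+2)]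
    ring

/-- Lagrange: top coefficient as a sum over nodes. -/
lemma coeff_eq_sum_of_degree_lt (s : Finset ℕ) (v : ℕ → ℝ) (hv : Set.InjOn v s)
    (f : ℝ[X]) (hf : f.degree < s.card) :
    f.coeff (s.card - 1) = ∑ i ∈ s, f.eval (v i) * (∏ j ∈ s.erase i, (v i - v j))⁻¹ := by
  conv_lhs => rw [Lagrange.eq_interpolate hv hf]
  rw [Lagrange.interpolate_apply, finset_sum_coeff]
  apply Finset.sum_congr rfl
  intro i hi
  rw [coeff_C_mul]
  congr 1
  -- coeff of basis
  have hbasis : Lagrange.basis s v i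
      = C (∏ j ∈ s.erase i, (v i - v j)⁻¹) * ∏ j ∈ s.erase i, (X - C (v j)) := by
    rw [Lagrange.basis]
    simp only [Lagrange.basisDivisor]
    rw [Finset.prod_mul_distrib, map_prod]
  rw [hbasis, coeff_C_mul]
  have hM : (∏ j ∈ s.erase i, (X - C (v j)) : ℝ[X]).Monic :=
    monic_prod_of_monic _ _ (fun j _ => monic_X_sub_C _)
  have hMdeg : (∏ j ∈ s.erase i, (X - C (v j)) : ℝ[X]).natDegree = s.card - 1 := by
    rw [natDegree_prod_of_monic _ _ (fun j _ => monic_X_sub_C _)]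
    simp [natDegree_X_sub_C, Finset.card_erase_of_mem hi]
  rw [← hMdeg, hM.coeff_natDegree, mul_one, ← Finset.prod_inv_distrib]

theorem key_identity (a : ℕ) (ℓ : ℕ → ℝ) (hinj : Set.InjOn ℓ (Finset.range a)) :
    ∑ r ∈ Finset.range a, ℓ r * ∏ j ∈ (Finset.range a).erase r, ((ℓ r - 1 - ℓ j)/(ℓ r - ℓ j))
      = (∑ r ∈ Finset.range a, ℓ r) - (a : ℝ) * ((a : ℝ) - 1)/2 := by
  rcases a with _ | a₁
  · simp
  rcases a₁ with _ | k
  · simp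
  -- now a = k + 2
  set A : ℝ := ((k+2 : ℕ) : ℝ) with hA
  set s : Finset ℕ := Finset.range (k+2) with hs
  set P : ℝ[X] := Pprod (k+2) ℓ with hP
  set Pc : ℝ[X] := Pprod (k+2) (fun j => ℓ j + 1) with hPc
  set D : ℝ[X] := X * Pc - (X - C A) * P with hD
  set S : ℝ := ∑ j ∈ Finset.range (k+2), ℓ j with hSdef
  set Q : ℝ := ∑ j ∈ Finset.range (k+2), (ℓ j)^2 with hQdef
  have hP_top : P.coeff (k+2) = 1 := Pprod_coeff_top _ _
  have hP1 : P.coeff (k+1) = -S := Pprod_coeff_one (k+1) ℓ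
  have hP0 : P.coeff k = (S^2 - Q)/2 := Pprod_coeff_two k ℓ
  have hsum1 : ∑ j ∈ Finset.range (k+2), (ℓ j + 1) = S + ((k+2 : ℕ) : ℝ) := by
    rw [Finset.sum_add_distrib, Finset.sum_const, Finset.card_range]
    simp [hSdef]
  have hsum2 : ∑ j ∈ Finset.range (k+2), (ℓ j + 1)^2 = Q + 2*S + ((k+2 : ℕ) : ℝ) := by
    have : ∀ j ∈ Finset.range (k+2), (ℓ j + 1)^2 = (ℓ j)^2 + 2 * ℓ j + 1 := by
      intro j _; ring
    rw [Finset.sum_congr rfl this, Finset.sum_add_distrib, Finset.sum_add_distrib,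
      Finset.sum_const, Finset.card_range, ← Finset.mul_sum]
    simp [hQdef, hSdef]
  have hPc_top : Pc.coeff (k+2) = 1 := Pprod_coeff_top _ _
  have hPc1 : Pc.coeff (k+1) = -(S + A) := by
    rw [hPc, Pprod_coeff_one (k+1) (fun j => ℓ j + 1)]
    rw [hsum1, hA]
  have hPc0 : Pc.coeff k = ((S+A)^2 - (Q + 2*S + A))/2 := by
    rw [hPc, Pprod_coeff_two k (fun j => ℓ j + 1)]
    rw [hsum1, hsum2, hA]
  have hPhigh : ∀ m, k+2 < m → P.coeff m = 0 := by
    intro m hm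
    apply coeff_eq_zero_of_natDegree_lt
    rw [hP, Pprod_natDegree]; exact hm
  have hPchigh : ∀ m, k+2 < m → Pc.coeff m = 0 := by
    intro m hm
    apply coeff_eq_zero_of_natDegree_lt
    rw [hPc, Pprod_natDegree]; exact hm
  have hcoeffD : ∀ n, D.coeff (n+1) = Pc.coeff n - P.coeff n + A * P.coeff (n+1) := by
    intro n
    rw [hD, coeff_sub, coeff_X_mul, sub_mul, coeff_sub, coeff_X_mul, coeff_C_mul]
    ring
  have hDlt : D.degree < (s.card : WithBot ℕ) := by
    rw [hs, Finset.card_range]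
    rw [Polynomial.degree_lt_iff_coeff_zero]
    intro m hm
    have hm' : (k + 2 : ℕ) ≤ m := by exact_mod_cast hm
    obtain ⟨n, rfl⟩ : ∃ n, m = n + 1 := ⟨m - 1, by omega⟩
    rw [hcoeffD n]
    rcases Nat.lt_or_ge n (k+2) with hn | hn
    · have hn' : n = k+1 := by omega
      subst hn'
      rw [hPc1, hP1, hP_top]
      ring
    · rcases Nat.eq_or_lt_of_le hn with hn' | hn'
      · subst hn'
        rw [hP_top, hPc_top, hPhigh (k+2+1) (by omega)]
        ring
      · rw [hPhigh n hn', hPchigh n hn', hPhigh (n+1) (by omega)]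
        ring
  have hDcoeff : D.coeff (k+1) = A*(A-1)/2 - S := by
    have := hcoeffD k
    rw [hPc0, hP0, hP1] at this
    rw [this]
    ring
  -- Lagrange
  have hlag := coeff_eq_sum_of_degree_lt s ℓ hinj D hDlt
  have hcard : s.card = k + 2 := Finset.card_range _
  rw [hcard] at hlag
  have hkk : k + 2 - 1 = k + 1 := rfl
  rw [hkk] at hlag
  -- evaluate D at nodes
  have hEvalP : ∀ r ∈ s, P.eval (ℓ r) = 0 := by
    intro r hr
    rw [hP, Pprod, eval_prod]
    apply Finset.prod_eq_zero hr
    simp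
  have hEval : ∀ r ∈ s, D.eval (ℓ r) = -(ℓ r * ∏ j ∈ s.erase r, (ℓ r - 1 - ℓ j)) := by
    intro r hr
    rw [hD, eval_sub, eval_mul, eval_mul, eval_sub, eval_X, eval_C, hEvalP r hr, mul_zero,
      sub_zero]
    have : Pc.eval (ℓ r) = ∏ j ∈ s, (ℓ r - 1 - ℓ j) := by
      rw [hPc, Pprod, eval_prod]
      apply Finset.prod_congr rfl
      intro j _
      simp only [eval_sub, eval_X, eval_C]
      ring
    rw [this, ← Finset.mul_prod_erase s _ hr]
    ring
  rw [Finset.sum_congr rfl (fun r hr => by rw [hEval r hr])] at hlag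
  rw [hDcoeff] at hlag
  -- conclude
  have hfinal : ∀ r ∈ s, ℓ r * ∏ j ∈ s.erase r, ((ℓ r - 1 - ℓ j)/(ℓ r - ℓ j))
      = ℓ r * (∏ j ∈ s.erase r, (ℓ r - 1 - ℓ j)) * (∏ j ∈ s.erase r, (ℓ r - ℓ j))⁻¹ := by
    intro r hr
    rw [Finset.prod_div_distrib, div_eq_mul_inv]
    ring
  rw [Finset.sum_congr rfl hfinal]
  have : ∑ r ∈ s, ℓ r * (∏ j ∈ s.erase r, (ℓ r - 1 - ℓ j)) * (∏ j ∈ s.erase r, (ℓ r - ℓ j))⁻¹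
      = -∑ r ∈ s, (-(ℓ r * ∏ j ∈ s.erase r, (ℓ r - 1 - ℓ j))) * (∏ j ∈ s.erase r, (ℓ r - ℓ j))⁻¹ := by
    rw [← Finset.sum_neg_distrib]
    apply Finset.sum_congr rfl
    intro r _
    ring
  rw [this, ← hlag]
  rw [hSdef, hA]
  push_cast
  ring
/-! ### The Frobenius-style formula lower bound -/

open Polynomial Finset in
noncomputable def Delta (a : ℕ) (f : ℕ → ℝ) : ℝ :=
  ∏ j ∈ Finset.range a, ∏ i ∈ Finset.range j, (f i - f j)

def Lrow (a : ℕ) (ν : YoungDiagram) (i : ℕ) : ℕ := ν.rowLen i + (a - 1 - i)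

noncomputable def Gfun (a : ℕ) (ν : YoungDiagram) : ℝ :=
  (ν.card).factorial * Delta a (fun i => (Lrow a ν i : ℝ))
    / ∏ i ∈ Finset.range a, ((Lrow a ν i).factorial : ℝ)

lemma Lrow_lt (a : ℕ) (ν : YoungDiagram) {i j : ℕ} (hij : i < j) (hj : j < a) :
    Lrow a ν j < Lrow a ν i := by
  have := ν.rowLen_anti i j (le_of_lt hij)
  unfold Lrow
  omega

lemma Lrow_injOn (a : ℕ) (ν : YoungDiagram) :
    Set.InjOn (fun i => ((Lrow a ν i : ℝ))) (Finset.range a) := by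
  intro i hi j hj hij
  simp only [Finset.coe_mem, Finset.mem_coe, Finset.mem_range] at hi hj
  have : Lrow a ν i = Lrow a ν j := Nat.cast_injective hij
  rcases lt_trichotomy i j with h | h | h
  · have := Lrow_lt a ν h hj; omega
  · exact h
  · have := Lrow_lt a ν h hi; omega

/-- The Vandermonde-factor surgery lemma. -/
lemma Delta_update (a r : ℕ) (hr : r < a) (f f' : ℕ → ℝ)
    (hne : ∀ i, i ≠ r → f' i = f i) (hfr : f' r = f r - 1) :
    Delta a f' * ∏ j ∈ (Finset.range a).erase r, (f r - f j)
      = Delta a f * ∏ j ∈ (Finset.range a).erase r, (f r - 1 - f j) := by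
  classical
  have herase : (Finset.range a).erase r = Finset.range r ∪ Finset.Ioo r a := by
    ext x
    simp only [Finset.mem_erase, Finset.mem_union, Finset.mem_range, Finset.mem_Ioo]
    omega
  have hdisj : Disjoint (Finset.range r) (Finset.Ioo r a) := by
    rw [Finset.disjoint_left]
    intro x hx hx'
    simp only [Finset.mem_range] at hx
    simp only [Finset.mem_Ioo] at hx'
    omega
  have hsplitD : ∀ g : ℕ → ℝ, Delta a g
      = (∏ i ∈ Finset.range r, (g i - g r)) *
        ((∏ j ∈ Finset.range r, ∏ i ∈ Finset.range j, (g i - g j)) *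
         (∏ j ∈ Finset.Ioo r a, ∏ i ∈ Finset.range j, (g i - g j))) := by
    intro g
    rw [Delta, ← Finset.mul_prod_erase (Finset.range a)
      (fun j => ∏ i ∈ Finset.range j, (g i - g j)) (Finset.mem_range.mpr hr), herase,
      Finset.prod_union hdisj]
  rw [hsplitD f, hsplitD f', herase, Finset.prod_union hdisj, Finset.prod_union hdisj]
  -- simplify the f' pieces
  have e1 : (∏ i ∈ Finset.range r, (f' i - f' r))
      = ∏ i ∈ Finset.range r, (f i - f r + 1) := by
    apply Finset.prod_congr rfl
    intro i hi
    have : i ≠ r := by have := Finset.mem_range.mp hi; omega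
    rw [hne i this, hfr]; ring
  have e2 : (∏ j ∈ Finset.range r, ∏ i ∈ Finset.range j, (f' i - f' j))
      = ∏ j ∈ Finset.range r, ∏ i ∈ Finset.range j, (f i - f j) := by
    apply Finset.prod_congr rfl
    intro j hj
    have hjr := Finset.mem_range.mp hj
    apply Finset.prod_congr rfl
    intro i hi
    have hij := Finset.mem_range.mp hi
    rw [hne i (by omega), hne j (by omega)]
  have e3 : (∏ j ∈ Finset.Ioo r a, ∏ i ∈ Finset.range j, (f' i - f' j))
      = ∏ j ∈ Finset.Ioo r a,
          ((f r - 1 - f j) * ∏ i ∈ (Finset.range j).erase r, (f i - f j)) := by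
    apply Finset.prod_congr rfl
    intro j hj
    have hjr := Finset.mem_Ioo.mp hj
    rw [← Finset.mul_prod_erase (Finset.range j) (fun i => f' i - f' j)
      (Finset.mem_range.mpr hjr.1)]
    congr 1
    · rw [hfr, hne j (by omega)]
    · apply Finset.prod_congr rfl
      intro i hi
      have := Finset.mem_erase.mp hi
      rw [hne i this.1, hne j (by omega)]
  have e4 : (∏ j ∈ Finset.Ioo r a, ∏ i ∈ Finset.range j, (f i - f j))
      = ∏ j ∈ Finset.Ioo r a,
          ((f r - f j) * ∏ i ∈ (Finset.range j).erase r, (f i - f j)) := by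
    apply Finset.prod_congr rfl
    intro j hj
    have hjr := Finset.mem_Ioo.mp hj
    rw [← Finset.mul_prod_erase (Finset.range j) (fun i => f i - f j)
      (Finset.mem_range.mpr hjr.1)]
  rw [e1, e2, e3, e4, Finset.prod_mul_distrib, Finset.prod_mul_distrib]
  have hpair : (∏ i ∈ Finset.range r, (f i - f r + 1)) * (∏ j ∈ Finset.range r, (f r - f j))
      = (∏ i ∈ Finset.range r, (f i - f r)) * (∏ j ∈ Finset.range r, (f r - 1 - f j)) := by
    rw [← Finset.prod_mul_distrib, ← Finset.prod_mul_distrib]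
    apply Finset.prod_congr rfl
    intro i _
    ring
  set A1 := ∏ i ∈ Finset.range r, (f i - f r)
  set A1' := ∏ i ∈ Finset.range r, (f i - f r + 1)
  set B1 := ∏ j ∈ Finset.range r, (f r - f j)
  set B1' := ∏ j ∈ Finset.range r, (f r - 1 - f j)
  set C1 := ∏ j ∈ Finset.Ioo r a, (f r - f j)
  set C1' := ∏ j ∈ Finset.Ioo r a, (f r - 1 - f j)
  set R := ∏ j ∈ Finset.Ioo r a, ∏ i ∈ (Finset.range j).erase r, (f i - f j)
  set Pr := ∏ j ∈ Finset.range r, ∏ i ∈ Finset.range j, (f i - f j)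
  linear_combination (Pr * C1 * C1' * R) * hpair

lemma card_eq_sum_rowLen (ν : YoungDiagram) (a : ℕ) (hcol : ν.colLen 0 ≤ a) :
    ν.card = ∑ i ∈ Finset.range a, ν.rowLen i := by
  have hcells : ν.cells = (Finset.range a).biUnion (fun i => ν.row i) := by
    ext x
    simp only [Finset.mem_biUnion, Finset.mem_range, YoungDiagram.mem_row_iff]
    constructor
    · intro hx
      refine ⟨x.1, ?_, ⟨hx, rfl⟩⟩
      have hx' : (x.1, x.2) ∈ ν := by simpa using hx
      rw [YoungDiagram.mem_iff_lt_colLen] at hx'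
      have := ν.colLen_anti 0 x.2 (Nat.zero_le _)
      omega
    · rintro ⟨i, _, hx, rfl⟩
      exact hx
  show ν.cells.card = _
  rw [hcells, Finset.card_biUnion]
  · exact Finset.sum_congr rfl (fun i _ => (ν.rowLen_eq_card (i := i)).symm)
  · intro i _ j _ hij
    rw [Function.onFun, Finset.disjoint_left]
    intro x hx hx'
    rw [YoungDiagram.mem_row_iff] at hx hx'
    exact hij (hx.2 ▸ hx'.2)

lemma notRemovable_succ {ν : YoungDiagram} {a r : ℕ} (hcol : ν.colLen 0 ≤ a)
    (hr : r < a) (hnot : ¬ Removable ν r) (hne : ¬(ν.rowLen r = 0 ∧ r = a - 1)) :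
    r + 1 < a ∧ Lrow a ν r = Lrow a ν (r+1) + 1 := by
  unfold Removable at hnot
  push_neg at hnot
  have hanti := ν.rowLen_anti r (r+1) (by omega)
  have heq : ν.rowLen (r+1) = ν.rowLen r := le_antisymm hanti hnot
  have hra : r + 1 < a := by
    by_cases h0 : ν.rowLen r = 0
    · have : r ≠ a - 1 := fun h => hne ⟨h0, h⟩
      omega
    · have : (r + 1, 0) ∈ ν := by
        rw [YoungDiagram.mem_iff_lt_rowLen]
        omega
      rw [YoungDiagram.mem_iff_lt_colLen] at this
      have := ν.colLen_anti 0 0 (le_refl 0)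
      omega
  refine ⟨hra, ?_⟩
  unfold Lrow
  omega

lemma term_zero (a : ℕ) (ν : YoungDiagram) (r : ℕ) (hcol : ν.colLen 0 ≤ a)
    (hr : r < a) (hnot : ¬ Removable ν r) :
    ((Lrow a ν r : ℝ)) * ∏ j ∈ (Finset.range a).erase r,
      (((Lrow a ν r : ℝ) - 1 - (Lrow a ν j : ℝ))/((Lrow a ν r : ℝ) - (Lrow a ν j : ℝ))) = 0 := by
  by_cases hcase : ν.rowLen r = 0 ∧ r = a - 1
  · have : Lrow a ν r = 0 := by unfold Lrow; omega
    rw [this]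
    simp
  · obtain ⟨hra, hL⟩ := notRemovable_succ hcol hr hnot hcase
    have hmem : r + 1 ∈ (Finset.range a).erase r := by
      rw [Finset.mem_erase, Finset.mem_range]
      omega
    rw [Finset.prod_eq_zero hmem, mul_zero]
    have : ((Lrow a ν r : ℝ)) - 1 - (Lrow a ν (r+1) : ℝ) = 0 := by
      rw [hL]
      push_cast
      ring
    rw [this, zero_div]

lemma Lrow_factorial_ne (a : ℕ) (ν : YoungDiagram) :
    (∏ i ∈ Finset.range a, ((Lrow a ν i).factorial : ℝ)) ≠ 0 := by
  apply Finset.prod_ne_zero_iff.mpr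
  intro i _
  exact_mod_cast (Nat.factorial_pos _).ne'

lemma den_ne (a : ℕ) (ν : YoungDiagram) {r : ℕ} (hr : r < a) :
    (∏ j ∈ (Finset.range a).erase r, ((Lrow a ν r : ℝ) - (Lrow a ν j : ℝ))) ≠ 0 := by
  apply Finset.prod_ne_zero_iff.mpr
  intro j hj
  obtain ⟨hjr, hja⟩ := Finset.mem_erase.mp hj
  rw [Finset.mem_range] at hja
  intro hzero
  have heq : ((Lrow a ν j : ℝ)) = (Lrow a ν r : ℝ) := by linarith
  exact hjr (Lrow_injOn a ν (Finset.mem_coe.mpr (Finset.mem_range.mpr hja))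
    (Finset.mem_coe.mpr (Finset.mem_range.mpr hr)) heq)

lemma G_term (a : ℕ) (ν : YoungDiagram) (r : ℕ) (hr : r < a) (hrem : Removable ν r) :
    ((ν.card - 1).factorial : ℝ) * Delta a (fun i => (Lrow a ν i : ℝ))
        * ((Lrow a ν r : ℝ) * ∏ j ∈ (Finset.range a).erase r,
            (((Lrow a ν r : ℝ) - 1 - (Lrow a ν j : ℝ))/((Lrow a ν r : ℝ) - (Lrow a ν j : ℝ))))
        / ∏ i ∈ Finset.range a, ((Lrow a ν i).factorial : ℝ)
      = Gfun a (eraseC ν r) := by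
  classical
  set f : ℕ → ℝ := fun i => (Lrow a ν i : ℝ) with hf
  set f' : ℕ → ℝ := fun i => (Lrow a (eraseC ν r) i : ℝ) with hf'
  have hrpos : 0 < ν.rowLen r := hrem.pos
  have hLrec : ∀ i, Lrow a (eraseC ν r) i = if i = r then Lrow a ν r - 1 else Lrow a ν i := by
    intro i
    unfold Lrow
    rw [eraseC_rowLen hrem]
    split_ifs with h
    · subst h; omega
    · rfl
  have hne : ∀ i, i ≠ r → f' i = f i := by
    intro i hi
    simp only [hf, hf', hLrec i, if_neg hi]
  have hfr' : f' r = f r - 1 := by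
    have h1 : Lrow a ν r = (Lrow a ν r - 1) + 1 := by unfold Lrow; omega
    simp only [hf, hf', hLrec r, if_pos rfl]
    rw [h1]
    push_cast
    ring
  have hsurg := Delta_update a r hr f f' hne hfr'
  -- factorial product relation
  have hfact : (∏ i ∈ Finset.range a, ((Lrow a (eraseC ν r) i).factorial : ℝ)) * f r
      = ∏ i ∈ Finset.range a, ((Lrow a ν i).factorial : ℝ) := by
    rw [← Finset.mul_prod_erase (Finset.range a)
        (fun i => ((Lrow a (eraseC ν r) i).factorial : ℝ)) (Finset.mem_range.mpr hr),
      ← Finset.mul_prod_erase (Finset.range a)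
        (fun i => ((Lrow a ν i).factorial : ℝ)) (Finset.mem_range.mpr hr)]
    have h1 : ∀ i ∈ (Finset.range a).erase r,
        ((Lrow a (eraseC ν r) i).factorial : ℝ) = ((Lrow a ν i).factorial : ℝ) := by
      intro i hi
      rw [hLrec i, if_neg (Finset.mem_erase.mp hi).1]
    rw [Finset.prod_congr rfl h1]
    have h2 : ((Lrow a (eraseC ν r) r).factorial : ℝ) * f r = ((Lrow a ν r).factorial : ℝ) := by
      rw [hLrec r, if_pos rfl]
      have h3 : Lrow a ν r = (Lrow a ν r - 1) + 1 := by unfold Lrow; omega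
      have h4 : (Lrow a ν r).factorial = ((Lrow a ν r - 1) + 1) * (Lrow a ν r - 1).factorial := by
        conv_lhs => rw [h3]
        rw [Nat.factorial_succ]
      simp only [hf]
      rw [h4]
      push_cast
      have h5 : ((Lrow a ν r : ℕ) : ℝ) = ((Lrow a ν r - 1 : ℕ) : ℝ) + 1 := by
        conv_lhs => rw [h3]
        push_cast
        ring
      rw [h5]
      ring
    rw [mul_comm (((Lrow a (eraseC ν r) r).factorial : ℝ)) _, mul_assoc, h2, mul_comm]
  -- cardinalities
  have hcard : (eraseC ν r).card = ν.card - 1 := eraseC_card hrem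
  -- assemble
  rw [Gfun, hcard]
  have hquot : (∏ j ∈ (Finset.range a).erase r,
      ((f r - 1 - f j)/(f r - f j)))
      = (∏ j ∈ (Finset.range a).erase r, (f r - 1 - f j))
        * (∏ j ∈ (Finset.range a).erase r, (f r - f j))⁻¹ := by
    rw [Finset.prod_div_distrib, div_eq_mul_inv]
  show ((ν.card - 1).factorial : ℝ) * Delta a f * (f r * ∏ j ∈ (Finset.range a).erase r,
      ((f r - 1 - f j)/(f r - f j))) / ∏ i ∈ Finset.range a, ((Lrow a ν i).factorial : ℝ)
    = ((ν.card - 1).factorial : ℝ) * Delta a f' / ∏ i ∈ Finset.range a, ((Lrow a (eraseC ν r) i).factorial : ℝ)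
  rw [hquot]
  have hden := den_ne a ν hr
  have hfac1 := Lrow_factorial_ne a ν
  have hfac2 := Lrow_factorial_ne a (eraseC ν r)
  rw [div_eq_div_iff hfac1 hfac2]
  rw [← hfact]
  have hdenf : (∏ j ∈ (Finset.range a).erase r, (f r - f j)) ≠ 0 := hden
  have hstep : Delta a f * ((∏ j ∈ (Finset.range a).erase r, (f r - 1 - f j))
      * (∏ j ∈ (Finset.range a).erase r, (f r - f j))⁻¹) = Delta a f' := by
    rw [← mul_assoc, ← hsurg, mul_assoc, mul_inv_cancel₀ hdenf, mul_one]
  rw [← hstep]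
  ring

lemma G_eq_sum (a : ℕ) (ν : YoungDiagram) (hcol : ν.colLen 0 ≤ a) (hpos : 0 < ν.card) :
    Gfun a ν = ∑ r ∈ Finset.range a, (if Removable ν r then Gfun a (eraseC ν r) else 0) := by
  classical
  set f : ℕ → ℝ := fun i => (Lrow a ν i : ℝ) with hf
  have hid := key_identity a f (Lrow_injOn a ν)
  have hsumf : ∑ r ∈ Finset.range a, f r = (ν.card : ℝ) + (a : ℝ)*((a : ℝ)-1)/2 := by
    have h2 : ∑ r ∈ Finset.range a, (a - 1 - r) = ∑ r ∈ Finset.range a, r :=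
      Finset.sum_range_reflect (fun j => j) a
    have h1 : ∑ r ∈ Finset.range a, Lrow a ν r = ν.card + ∑ r ∈ Finset.range a, r := by
      unfold Lrow
      rw [Finset.sum_add_distrib, h2, ← card_eq_sum_rowLen ν a hcol]
    have h3 : (∑ r ∈ Finset.range a, r) * 2 = a * (a - 1) := Finset.sum_range_id_mul_two a
    have hcast : ((a * (a-1) : ℕ) : ℝ) = (a:ℝ) * ((a:ℝ) - 1) := by
      rcases Nat.eq_zero_or_pos a with h0 | h0
      · subst h0; simp
      · have : ((a - 1 : ℕ) : ℝ) = (a:ℝ) - 1 := by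
          rw [Nat.cast_sub h0]; norm_num
        push_cast [this]
        ring
    have h5 : (∑ r ∈ Finset.range a, f r) = ((∑ r ∈ Finset.range a, Lrow a ν r : ℕ) : ℝ) := by
      push_cast
      rfl
    rw [h5, h1]
    have h6 : ((∑ r ∈ Finset.range a, r : ℕ) : ℝ) * 2 = (a:ℝ) * ((a:ℝ)-1) := by
      rw [← hcast]
      exact_mod_cast congrArg (fun x : ℕ => (x:ℝ)) h3
    push_cast at h6 ⊢
    try linarith
  rw [hsumf] at hid
  -- hid : ∑ t_r = card
  have hid' : ∑ r ∈ Finset.range a,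
      f r * ∏ j ∈ (Finset.range a).erase r, ((f r - 1 - f j)/(f r - f j)) = (ν.card : ℝ) := by
    rw [hid]; ring
  have hGn : Gfun a ν = ((ν.card - 1).factorial : ℝ) * Delta a f * (ν.card : ℝ)
      / ∏ i ∈ Finset.range a, ((Lrow a ν i).factorial : ℝ) := by
    rw [Gfun]
    have hfac : ((ν.card).factorial : ℝ) = (ν.card : ℝ) * ((ν.card - 1).factorial : ℝ) := by
      exact_mod_cast (Nat.mul_factorial_pred hpos.ne').symm
    rw [hfac]
    ring
  rw [hGn, ← hid', Finset.mul_sum, Finset.sum_div]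
  apply Finset.sum_congr rfl
  intro r hrmem
  have hr := Finset.mem_range.mp hrmem
  by_cases hrem : Removable ν r
  · rw [if_pos hrem]
    exact G_term a ν r hr hrem
  · rw [if_neg hrem]
    have := term_zero a ν r hcol hr hrem
    simp only [hf] at this ⊢
    rw [this]
    simp

lemma fdeg_pos_of_empty {ν : YoungDiagram} (h : ν.cells = ∅) : 1 ≤ fdeg ν := by
  have hcard : ν.card = 0 := by show ν.cells.card = 0; rw [h]; rfl
  have hSYT : IsSYT ν (fun _ => 0) := by
    refine ⟨?_, ?_, ?_, ?_, ?_⟩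
    · intro c hc; rw [h] at hc; simp at hc
    · intro c _; rfl
    · intro x hx; rw [h] at hx; simp at hx
    · intro i j1 j2 _ hm
      have : (i, j2) ∈ ν.cells := hm
      rw [h] at this; simp at this
    · intro i1 i2 j _ hm
      have : (i2, j) ∈ ν.cells := hm
      rw [h] at this; simp at this
  have : Nonempty { T : ℕ × ℕ → ℕ // IsSYT ν T } := ⟨⟨_, hSYT⟩⟩
  exact Nat.one_le_iff_ne_zero.mpr (Nat.card_ne_zero.mpr ⟨this, sytFinite ν⟩)

lemma Delta_staircase (a K : ℕ) :
    Delta a (fun i => ((K + (a - 1 - i) : ℕ) : ℝ)) = ∏ j ∈ Finset.range a, (j.factorial : ℝ) := by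
  rw [Delta]
  apply Finset.prod_congr rfl
  intro j hj
  have hja := Finset.mem_range.mp hj
  have h1 : ∀ i ∈ Finset.range j,
      ((K + (a - 1 - i) : ℕ) : ℝ) - ((K + (a - 1 - j) : ℕ) : ℝ) = ((j - i : ℕ) : ℝ) := by
    intro i hi
    have hij := Finset.mem_range.mp hi
    have : (K + (a - 1 - i)) = (K + (a - 1 - j)) + (j - i) := by omega
    rw [this]
    push_cast
    ring
  rw [Finset.prod_congr rfl h1, ← Nat.cast_prod]
  have h2 : ∏ i ∈ Finset.range j, (j - i) = j.factorial := by
    rw [← Finset.prod_range_reflect (fun i => j - i) j]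
    rw [Finset.prod_congr rfl (fun i hi => by
      have := Finset.mem_range.mp hi
      show j - (j - 1 - i) = i + 1
      omega)]
    exact Finset.prod_range_add_one_eq_factorial j
  rw [h2]

lemma Gfun_of_flat (a K : ℕ) (ν : YoungDiagram) (hflat : ∀ i, i < a → ν.rowLen i = K) :
    Gfun a ν = (ν.card).factorial * (∏ j ∈ Finset.range a, (j.factorial : ℝ))
      / ∏ k ∈ Finset.range a, (((K + k).factorial : ℝ)) := by
  have hL : ∀ i ∈ Finset.range a, Lrow a ν i = K + (a - 1 - i) := by
    intro i hi
    unfold Lrow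
    rw [hflat i (Finset.mem_range.mp hi)]
  rw [Gfun]
  have hD : Delta a (fun i => (Lrow a ν i : ℝ))
      = Delta a (fun i => ((K + (a - 1 - i) : ℕ) : ℝ)) := by
    rw [Delta, Delta]
    apply Finset.prod_congr rfl
    intro j hj
    apply Finset.prod_congr rfl
    intro i hi
    have hja := Finset.mem_range.mp hj
    have hij := Finset.mem_range.mp hi
    rw [hL i (Finset.mem_range.mpr (by omega)), hL j hj]
  rw [hD, Delta_staircase]
  congr 1
  rw [← Finset.prod_range_reflect (fun k => (((K + k).factorial : ℝ))) a]
  apply Finset.prod_congr rfl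
  intro i hi
  rw [hL i hi]

theorem G_le_fdeg (a : ℕ) : ∀ (n : ℕ) (ν : YoungDiagram), ν.card = n → ν.colLen 0 ≤ a →
    Gfun a ν ≤ (fdeg ν : ℝ) := by
  intro n
  induction n using Nat.strong_induction_on with
  | _ n ih =>
    intro ν hcard hcol
    rcases Nat.eq_zero_or_pos n with h0 | hpos
    · subst h0
      have hempty : ν.cells = ∅ := Finset.card_eq_zero.mp hcard
      have hflat : ∀ i, i < a → ν.rowLen i = 0 := by
        intro i _
        by_contra h
        have : (i, 0) ∈ ν := by rw [YoungDiagram.mem_iff_lt_rowLen]; omega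
        have : (i, 0) ∈ ν.cells := this
        rw [hempty] at this
        simp at this
      have hG : Gfun a ν = 1 := by
        rw [Gfun_of_flat a 0 ν hflat, hcard]
        simp only [Nat.factorial_zero, Nat.cast_one, one_mul, zero_add]
        rw [div_self]
        exact Finset.prod_ne_zero_iff.mpr (fun i _ => by
          exact_mod_cast (Nat.factorial_pos _).ne')
      rw [hG]
      exact_mod_cast fdeg_pos_of_empty hempty
    · rw [G_eq_sum a ν hcol (hcard ▸ hpos)]
      have hterm : ∀ r ∈ Finset.range a,
          (if Removable ν r then Gfun a (eraseC ν r) else 0)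
            ≤ (if Removable ν r then ((fdeg (eraseC ν r) : ℕ) : ℝ) else 0) := by
        intro r _
        by_cases hrem : Removable ν r
        · rw [if_pos hrem, if_pos hrem]
          apply ih ((eraseC ν r).card)
          · rw [eraseC_card hrem, hcard]
            omega
          · rfl
          · exact le_trans (eraseC_colLen_le r) hcol
        · rw [if_neg hrem, if_neg hrem]
      calc ∑ r ∈ Finset.range a, (if Removable ν r then Gfun a (eraseC ν r) else 0)
          ≤ ∑ r ∈ Finset.range a, (if Removable ν r then ((fdeg (eraseC ν r) : ℕ) : ℝ) else 0) :=
            Finset.sum_le_sum hterm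
        _ = ((∑ r ∈ Finset.range a, if Removable ν r then fdeg (eraseC ν r) else 0 : ℕ) : ℝ) := by
            push_cast
            apply Finset.sum_congr rfl
            intro r _
            split_ifs <;> simp
        _ ≤ (fdeg ν : ℝ) := by exact_mod_cast sum_fdeg_le ν a
/-! ### Rectangle facts and the main theorem -/

lemma mem_rect {a b : ℕ} {x : ℕ × ℕ} : x ∈ rect a b ↔ x.1 < a ∧ x.2 < b := by
  show x ∈ (rect a b).cells ↔ _
  rw [show (rect a b).cells = Finset.range a ×ˢ Finset.range b from rfl, Finset.mem_product]
  simp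

lemma rowLen_eq_of {μ : YoungDiagram} {i m : ℕ} (h : ∀ j, ((i, j) ∈ μ ↔ j < m)) :
    μ.rowLen i = m := by
  have h1 : ∀ j, (j < μ.rowLen i ↔ j < m) := fun j =>
    (YoungDiagram.mem_iff_lt_rowLen).symm.trans (h j)
  have h2 := h1 (μ.rowLen i)
  have h3 := h1 m
  omega

lemma rect_rowLen {a b : ℕ} {i : ℕ} (hi : i < a) : (rect a b).rowLen i = b :=
  rowLen_eq_of (fun j => by simp [mem_rect, hi])

lemma rect_colLen {a b : ℕ} (hb : 0 < b) : (rect a b).colLen 0 = a := by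
  have h : ∀ i, ((i, 0) ∈ rect a b ↔ i < a) := fun i => by simp [mem_rect, hb]
  have h1 : ∀ i, (i < (rect a b).colLen 0 ↔ i < a) := fun i =>
    (YoungDiagram.mem_iff_lt_colLen).symm.trans (h i)
  have h2 := h1 ((rect a b).colLen 0)
  have h3 := h1 a
  omega

lemma rect_card {a b : ℕ} : (rect a b).card = a * b := by
  show (Finset.range a ×ˢ Finset.range b).card = a * b
  rw [Finset.card_product, Finset.card_range, Finset.card_range]

lemma choose_le_two_pow' {n k : ℕ} : n.choose k ≤ 2 ^ n := by
  by_cases h : k ≤ n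
  · calc n.choose k ≤ ∑ i ∈ Finset.range (n+1), n.choose i :=
        Finset.single_le_sum (fun i _ => Nat.zero_le _) (Finset.mem_range.mpr (by omega))
      _ = 2 ^ n := Nat.sum_range_choose n
  · rw [Nat.choose_eq_zero_of_lt (by omega)]
    exact Nat.zero_le _

lemma prod_fact_le (a b : ℕ) (hab : a ≤ b) :
    (∏ k ∈ Finset.range a, (b + k).factorial)
      ≤ 2 ^ (2 * (a * b)) * ((∏ k ∈ Finset.range a, k.factorial) * (b.factorial) ^ a) := by
  have h1 : ∀ k, (b + k).factorial = (b + k).choose k * (k.factorial * b.factorial) := by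
    intro k
    have h := Nat.choose_mul_factorial_mul_factorial (show k ≤ b + k by omega)
    have h2 : b + k - k = b := by omega
    rw [h2] at h
    rw [← h]
    ring
  calc (∏ k ∈ Finset.range a, (b + k).factorial)
      = ∏ k ∈ Finset.range a, ((b + k).choose k * (k.factorial * b.factorial)) :=
        Finset.prod_congr rfl (fun k _ => h1 k)
    _ = (∏ k ∈ Finset.range a, (b + k).choose k)
        * ((∏ k ∈ Finset.range a, k.factorial) * (b.factorial) ^ a) := by
        rw [Finset.prod_mul_distrib, Finset.prod_mul_distrib, Finset.prod_const,
          Finset.card_range]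
    _ ≤ 2 ^ (2 * (a * b)) * ((∏ k ∈ Finset.range a, k.factorial) * (b.factorial) ^ a) := by
        apply Nat.mul_le_mul_right
        calc (∏ k ∈ Finset.range a, (b + k).choose k)
            ≤ ∏ k ∈ Finset.range a, 2 ^ (b + k) :=
              Finset.prod_le_prod' (fun k _ => choose_le_two_pow')
          _ = 2 ^ (∑ k ∈ Finset.range a, (b + k)) := by
              rw [← Finset.prod_pow_eq_pow_sum]
          _ ≤ 2 ^ (2 * (a * b)) := by
              apply Nat.pow_le_pow_right (by norm_num)
              rw [Finset.sum_add_distrib, Finset.sum_const, Finset.card_range, smul_eq_mul]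
              have h3 := Finset.sum_range_id_mul_two a
              have h4 : (∑ i ∈ Finset.range a, i) * 2 ≤ a * (2 * b) := by
                rw [h3]
                apply Nat.mul_le_mul_left
                omega
              have h5 : a * (2 * b) = 2 * (a * b) := by ring
              omega

theorem stmt5' (a b : ℕ) (ha : 1 ≤ a) (hab : a ≤ b) :
    ((a * b).factorial : ℝ) / (b.factorial : ℝ) ^ a / 2 ^ (2 * (a * b))
      ≤ (fdeg (rect a b) : ℝ) := by
  have hb : 0 < b := lt_of_lt_of_le ha hab
  have hcol : (rect a b).colLen 0 ≤ a := le_of_eq (rect_colLen hb)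
  have hmain := G_le_fdeg a ((rect a b).card) (rect a b) rfl hcol
  have hflat : ∀ i, i < a → (rect a b).rowLen i = b := fun i hi => rect_rowLen hi
  have hGr : Gfun a (rect a b)
      = ((a*b).factorial : ℝ) * (∏ j ∈ Finset.range a, (j.factorial : ℝ))
        / ∏ k ∈ Finset.range a, (((b+k).factorial : ℝ)) := by
    rw [Gfun_of_flat a b (rect a b) hflat, rect_card]
  refine le_trans ?_ (hGr ▸ hmain)
  have hpos1 : (0:ℝ) < (b.factorial : ℝ) ^ a * 2 ^ (2 * (a * b)) := by
    apply mul_pos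
    · exact pow_pos (by exact_mod_cast Nat.factorial_pos b) a
    · positivity
  have hpos2 : (0:ℝ) < ∏ k ∈ Finset.range a, (((b+k).factorial : ℝ)) := by
    apply Finset.prod_pos
    intro k _
    exact_mod_cast Nat.factorial_pos (b+k)
  rw [div_div, div_le_div_iff₀ hpos1 hpos2]
  -- goal : (ab)! * ∏(b+k)! ≤ (ab)! * ∏ j! * ((b!)^a * 2^(2ab))
  have hnat := prod_fact_le a b hab
  have hreal : ((∏ k ∈ Finset.range a, (b + k).factorial : ℕ) : ℝ)
      ≤ ((2 ^ (2 * (a * b)) * ((∏ k ∈ Finset.range a, k.factorial) * (b.factorial) ^ a) : ℕ) : ℝ) := by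
    exact_mod_cast hnat
  push_cast at hreal
  have hfac_nonneg : (0:ℝ) ≤ ((a*b).factorial : ℝ) := by positivity
  calc ((a * b).factorial : ℝ) * ∏ k ∈ Finset.range a, (((b+k).factorial : ℝ))
      ≤ ((a * b).factorial : ℝ)
        * (2 ^ (2 * (a * b)) * ((∏ k ∈ Finset.range a, (k.factorial : ℝ)) * (b.factorial : ℝ) ^ a)) := by
        apply mul_le_mul_of_nonneg_left _ hfac_nonneg
        exact hreal
    _ = ((a * b).factorial : ℝ) * (∏ j ∈ Finset.range a, (j.factorial : ℝ))
        * ((b.factorial : ℝ) ^ a * 2 ^ (2 * (a * b))) := by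
        ring

/-- for `1 ≤ a ≤ b` and `n = ab`, the rectangular partition
`μ = (b^a)` satisfies `f^μ ≥ (n!/(b!)^a) · 2^{−2n}`. -/
theorem stmt5 (a b : ℕ) (ha : 1 ≤ a) (hab : a ≤ b) :
    ((a * b).factorial : ℝ) / (b.factorial : ℝ) ^ a / 2 ^ (2 * (a * b))
      ≤ (fdeg (rect a b) : ℝ) := stmt5' a b ha hab
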